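/- Let f ∈ ℂ[X1, X2] be a polynomial lying in the ℂ-span of the monomials X1^{b1} X2^{b2} with 0 ≤ b1 < a1 and 0 ≤ b2 < a2. Then f satisfies the equivariance condition α1 α2 · f(α1 X1, α2 X2) = f(X1, X2) for every (α1, α2) ∈ G_W if and only if f lies in the ℂ-span of X1^{a1−1} and X2^{a2−1}. In particular, the space of such G_W-equivariant polynomials is 2-dimensional. -/

import Mathlib

noncomputable section

/-- The maximal group of diagonal symmetries of the two-dimensional loop
potential `W = X1^a1 * X2 + X2^a2 * X1`. -/
def loopSymGroup (a1 a2 : ℕ) : Subgroup (ℂˣ × ℂˣ) where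
  carrier := {p | (p.1 : ℂ) ^ a1 * (p.2 : ℂ) = 1 ∧ (p.2 : ℂ) ^ a2 * (p.1 : ℂ) = 1}
  one_mem' := by simp
  mul_mem' := by
    rintro ⟨x1, x2⟩ ⟨y1, y2⟩ ⟨hx1, hx2⟩ ⟨hy1, hy2⟩
    refine ⟨?_, ?_⟩
    · show ((x1 * y1 : ℂˣ) : ℂ) ^ a1 * ((x2 * y2 : ℂˣ) : ℂ) = 1
      push_cast
      rw [mul_pow]
      calc (x1:ℂ)^a1 * (y1:ℂ)^a1 * ((x2:ℂ) * (y2:ℂ))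
          = ((x1:ℂ)^a1 * x2) * ((y1:ℂ)^a1 * y2) := by ring
        _ = 1 := by rw [hx1, hy1, one_mul]
    · show ((x2 * y2 : ℂˣ) : ℂ) ^ a2 * ((x1 * y1 : ℂˣ) : ℂ) = 1
      push_cast
      rw [mul_pow]
      calc (x2:ℂ)^a2 * (y2:ℂ)^a2 * ((x1:ℂ) * (y1:ℂ))
          = ((x2:ℂ)^a2 * x1) * ((y2:ℂ)^a2 * y1) := by ring
        _ = 1 := by rw [hx2, hy2, one_mul]
  inv_mem' := by
    rintro ⟨x1, x2⟩ ⟨h1, h2⟩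
    refine ⟨?_, ?_⟩
    · show ((x1⁻¹ : ℂˣ) : ℂ) ^ a1 * ((x2⁻¹ : ℂˣ) : ℂ) = 1
      rw [Units.val_inv_eq_inv_val, Units.val_inv_eq_inv_val, inv_pow, ← mul_inv, h1, inv_one]
    · show ((x2⁻¹ : ℂˣ) : ℂ) ^ a2 * ((x1⁻¹ : ℂˣ) : ℂ) = 1
      rw [Units.val_inv_eq_inv_val, Units.val_inv_eq_inv_val, inv_pow, ← mul_inv, h2, inv_one]


open MvPolynomial

lemma scale_monomial (c0 c1 : ℂ) (u : Fin 2 →₀ ℕ) (a : ℂ) :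
    aeval ![c0 • X 0, c1 • X 1] (monomial u a) = (c0 ^ u 0 * c1 ^ u 1) • monomial u a := by
  rw [monomial_eq, Finsupp.prod_pow, Fin.prod_univ_two]
  simp only [smul_eq_C_mul, map_mul, map_pow, aeval_X, aeval_C, Matrix.cons_val_zero,
    Matrix.cons_val_one, Matrix.head_cons, algebraMap_eq, C_mul, C_pow]
  ring

lemma coeff_scale (c0 c1 : ℂ) (f : MvPolynomial (Fin 2) ℂ) (d : Fin 2 →₀ ℕ) :
    coeff d (aeval ![c0 • X 0, c1 • X 1] f) = c0 ^ (d 0) * c1 ^ (d 1) * coeff d f := by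
  induction f using MvPolynomial.induction_on' with
  | monomial u a =>
      rw [scale_monomial, coeff_smul, coeff_monomial]
      split_ifs with h
      · subst h; simp [smul_eq_mul]
      · simp
  | add p q hp hq => rw [map_add, coeff_add, hp, hq, coeff_add]; ring

lemma support_bound {a1 a2 : ℕ} {f : MvPolynomial (Fin 2) ℂ}
    (hf : f ∈ Submodule.span ℂ
      {m : MvPolynomial (Fin 2) ℂ | ∃ b1 < a1, ∃ b2 < a2, m = X 0 ^ b1 * X 1 ^ b2})
    (d : Fin 2 →₀ ℕ) (hd : a1 ≤ d 0 ∨ a2 ≤ d 1) : coeff d f = 0 := by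
  induction hf using Submodule.span_induction with
  | mem m hm =>
      obtain ⟨b1, hb1, b2, hb2, rfl⟩ := hm
      rw [X_pow_eq_monomial, X_pow_eq_monomial, monomial_mul, one_mul, coeff_monomial]
      split_ifs with h
      · rw [← h] at hd
        simp [Finsupp.single_apply] at hd
        omega
      · rfl
  | zero => simp
  | add x y hx hy ihx ihy => simp [ihx, ihy]
  | smul a x hx ihx => simp [ihx]

lemma single_ne {a1 a2 : ℕ} (ha1 : 2 ≤ a1) (ha2 : 2 ≤ a2) :
    (Finsupp.single (0 : Fin 2) (a1 - 1) : Fin 2 →₀ ℕ) ≠ Finsupp.single 1 (a2 - 1) := by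
  intro h
  have := congrArg (fun g : Fin 2 →₀ ℕ => g 0) h
  simp [Finsupp.single_apply] at this
  omega


/-- A polynomial `f` in the span of the monomials `X1^b1 * X2^b2`
(`0 ≤ b1 < a1`, `0 ≤ b2 < a2`) satisfies the `G_W`-equivariance condition
`α1 α2 · f(α1 X1, α2 X2) = f` for all `(α1, α2) ∈ G_W` iff `f` lies in the span
of `X1^(a1-1)` and `X2^(a2-1)`; in particular this space is 2-dimensional. -/
theorem loopSymGroup_equivariant_polys (a1 a2 : ℕ) (ha1 : 2 ≤ a1) (ha2 : 2 ≤ a2)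
    (f : MvPolynomial (Fin 2) ℂ)
    (hf : f ∈ Submodule.span ℂ
      {m : MvPolynomial (Fin 2) ℂ | ∃ b1 < a1, ∃ b2 < a2, m = X 0 ^ b1 * X 1 ^ b2}) :
    ((∀ p ∈ loopSymGroup a1 a2,
        ((p.1 : ℂ) * (p.2 : ℂ)) •
          (aeval ![((p.1 : ℂ)) • (X 0 : MvPolynomial (Fin 2) ℂ),
                   ((p.2 : ℂ)) • (X 1 : MvPolynomial (Fin 2) ℂ)] f) = f) ↔
      f ∈ Submodule.span ℂ
        ({X 0 ^ (a1 - 1), X 1 ^ (a2 - 1)} : Set (MvPolynomial (Fin 2) ℂ))) ∧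
    Module.finrank ℂ
      (Submodule.span ℂ
        ({X 0 ^ (a1 - 1), X 1 ^ (a2 - 1)} : Set (MvPolynomial (Fin 2) ℂ))) = 2 := by
  have hA : 4 ≤ a1 * a2 := Nat.mul_le_mul ha1 ha2
  set e1 : Fin 2 →₀ ℕ := Finsupp.single 0 (a1 - 1) with he1
  set e2 : Fin 2 →₀ ℕ := Finsupp.single 1 (a2 - 1) with he2
  have he12 : e1 ≠ e2 := single_ne ha1 ha2
  have hc1 : ∀ d, coeff d (X 0 ^ (a1 - 1) : MvPolynomial (Fin 2) ℂ)
      = if e1 = d then 1 else 0 := by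
    intro d; rw [X_pow_eq_monomial, coeff_monomial, he1]
  have hc2 : ∀ d, coeff d (X 1 ^ (a2 - 1) : MvPolynomial (Fin 2) ℂ)
      = if e2 = d then 1 else 0 := by
    intro d; rw [X_pow_eq_monomial, coeff_monomial, he2]
  refine ⟨⟨?_, ?_⟩, ?_⟩
  · -- forward direction
    intro h
    set N := a1 * a2 - 1 with hN
    have hN0 : N ≠ 0 := by omega
    have hζ := Complex.isPrimitiveRoot_exp N hN0
    set ζ : ℂ := Complex.exp (2 * Real.pi * Complex.I / N) with hζdef
    have hζ0 : ζ ≠ 0 := Complex.exp_ne_zero _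
    set q : ℂˣ × ℂˣ := (Units.mk0 ζ hζ0, Units.mk0 ζ hζ0 ^ (-(a1:ℤ))) with hq
    have hq1 : (q.1 : ℂ) = ζ := rfl
    have hq2 : (q.2 : ℂ) = ζ ^ (-(a1:ℤ)) := Units.val_zpow_eq_zpow_val _ _
    have hNZ : ((N:ℤ)) = (a1:ℤ) * (a2:ℤ) - 1 := by
      rw [hN, Nat.cast_sub (by omega : 1 ≤ a1 * a2), Nat.cast_mul, Nat.cast_one]
    have hζN : ζ ^ ((N:ℤ)) = 1 := hζ.zpow_eq_one
    have hmem : q ∈ loopSymGroup a1 a2 := by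
      constructor
      · show (q.1:ℂ) ^ a1 * (q.2:ℂ) = 1
        rw [hq1, hq2, ← zpow_natCast ζ a1, ← zpow_add₀ hζ0]
        simp
      · show (q.2:ℂ) ^ a2 * (q.1:ℂ) = 1
        rw [hq2, hq1, ← zpow_natCast (ζ ^ (-(a1:ℤ))) a2, ← zpow_mul]
        calc ζ ^ (-(a1:ℤ) * a2) * ζ = ζ ^ (-(a1:ℤ) * a2) * ζ ^ (1:ℤ) := by rw [zpow_one]
          _ = ζ ^ (-(a1:ℤ) * a2 + 1) := (zpow_add₀ hζ0 _ _).symm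
          _ = ζ ^ (-(N:ℤ)) := by congr 1; rw [hNZ]; ring
          _ = 1 := by rw [zpow_neg, hζN, inv_one]
    specialize h q hmem
    have hco : ∀ d : Fin 2 →₀ ℕ, coeff d f ≠ 0 → d = e1 ∨ d = e2 := by
      intro d hdne
      have hd0 : d 0 < a1 := by
        by_contra hc; exact hdne (support_bound hf d (Or.inl (le_of_not_gt hc)))
      have hd1 : d 1 < a2 := by
        by_contra hc; exact hdne (support_bound hf d (Or.inr (le_of_not_gt hc)))
      have hcoeff := congrArg (coeff d) h
      rw [coeff_smul, coeff_scale, smul_eq_mul] at hcoeff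
      have hkey : (q.1:ℂ) ^ (d 0 + 1) * (q.2:ℂ) ^ (d 1 + 1) = 1 := by
        have h1 : ((q.1:ℂ) ^ (d 0 + 1) * (q.2:ℂ) ^ (d 1 + 1)) * coeff d f
            = 1 * coeff d f := by
          linear_combination hcoeff
        exact mul_right_cancel₀ hdne h1
      have hzp : ζ ^ ((d 0 : ℤ) + 1 - a1 * ((d 1 : ℤ) + 1)) = 1 := by
        rw [hq1, hq2] at hkey
        rw [← hkey, ← zpow_natCast ζ (d 0 + 1), ← zpow_natCast (ζ ^ (-(a1:ℤ))) (d 1 + 1),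
          ← zpow_mul, ← zpow_add₀ hζ0]
        congr 1
        push_cast
        ring
      rw [hζ.zpow_eq_one_iff_dvd] at hzp
      obtain ⟨k, hk⟩ := hzp
      rw [hNZ] at hk
      have hD0 : (0:ℤ) ≤ (d 0 : ℤ) := Int.natCast_nonneg _
      have hD1 : (0:ℤ) ≤ (d 1 : ℤ) := Int.natCast_nonneg _
      have hDA0 : (d 0 : ℤ) + 1 ≤ (a1:ℤ) := by exact_mod_cast hd0
      have hDA1 : (d 1 : ℤ) + 1 ≤ (a2:ℤ) := by exact_mod_cast hd1
      have hA1 : (2:ℤ) ≤ a1 := by exact_mod_cast ha1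
      have hA2 : (2:ℤ) ≤ a2 := by exact_mod_cast ha2
      have hvle : (d 0:ℤ) + 1 - a1 * ((d 1:ℤ) + 1) ≤ 0 := by nlinarith
      have hvge : -((a1:ℤ) * a2 - 1) ≤ (d 0:ℤ) + 1 - a1 * ((d 1:ℤ) + 1) := by nlinarith
      have hk01 : k = 0 ∨ k = -1 := by
        by_contra hcon
        push_neg at hcon
        have hk12 : 1 ≤ k ∨ k ≤ -2 := by omega
        rcases hk12 with hk1 | hk2
        · nlinarith
        · nlinarith
      rcases hk01 with rfl | rfl
      · left
        rw [mul_zero] at hk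
        have hmul : (a1:ℤ) * ((d 1:ℤ) + 1) ≤ (a1:ℤ) * 1 := by linarith
        have hd1z : (d 1:ℤ) + 1 ≤ 1 := le_of_mul_le_mul_left hmul (by linarith)
        have h1 : d 1 = 0 := by omega
        have hd1cast : ((d 1 : ℕ) : ℤ) = 0 := by exact_mod_cast h1
        rw [hd1cast] at hk
        have h0 : d 0 = a1 - 1 := by omega
        ext i
        fin_cases i <;> simp [he1, Finsupp.single_apply, h0, h1]
      · right
        have hmul : (a1:ℤ) * a2 ≤ (a1:ℤ) * ((d 1:ℤ) + 1) := by linarith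
        have hge : (a2:ℤ) ≤ (d 1:ℤ) + 1 := le_of_mul_le_mul_left hmul (by linarith)
        have h1 : d 1 = a2 - 1 := by omega
        have hd1cast : ((d 1 : ℕ) : ℤ) + 1 = (a2:ℤ) := by omega
        have h0 : d 0 = 0 := by
          have h0' : ((d 0 : ℕ) : ℤ) = 0 := by linear_combination hk + (a1:ℤ) * hd1cast
          exact_mod_cast h0'
        ext i
        fin_cases i <;> simp [he2, Finsupp.single_apply, h0, h1]
    have hrep : f = coeff e1 f • (X 0 ^ (a1 - 1) : MvPolynomial (Fin 2) ℂ)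
        + coeff e2 f • (X 1 ^ (a2 - 1)) := by
      apply MvPolynomial.ext
      intro d
      rw [coeff_add, coeff_smul, coeff_smul, hc1, hc2, smul_eq_mul, smul_eq_mul]
      by_cases hde1 : d = e1
      · subst hde1
        rw [if_pos rfl, if_neg (fun hh => he12 hh.symm)]
        ring
      · by_cases hde2 : d = e2
        · subst hde2
          rw [if_neg he12, if_pos rfl]
          ring
        · rw [if_neg (fun hh => hde1 hh.symm), if_neg (fun hh => hde2 hh.symm)]
          have hz : coeff d f = 0 := by
            by_contra hne
            rcases hco d hne with h' | h'
            · exact hde1 h'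
            · exact hde2 h'
          rw [hz]; ring
    rw [hrep]
    exact Submodule.add_mem _
      (Submodule.smul_mem _ _ (Submodule.subset_span (by simp)))
      (Submodule.smul_mem _ _ (Submodule.subset_span (by simp)))
  · -- backward direction
    intro hmem p hp
    obtain ⟨hp1, hp2⟩ := hp
    clear hf
    induction hmem using Submodule.span_induction with
    | mem m hm =>
        rcases hm with rfl | rfl
        · rw [map_pow, aeval_X]
          simp only [Matrix.cons_val_zero]
          rw [smul_pow, smul_smul]
          have hs : (p.1:ℂ) * (p.2:ℂ) * (p.1:ℂ) ^ (a1 - 1) = 1 := by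
            have hpow : (p.1:ℂ) ^ (a1 - 1) * (p.1:ℂ) = (p.1:ℂ) ^ a1 := by
              rw [← pow_succ]
              congr 1
              omega
            calc (p.1:ℂ) * (p.2:ℂ) * (p.1:ℂ) ^ (a1 - 1)
                = ((p.1:ℂ) ^ (a1 - 1) * (p.1:ℂ)) * (p.2:ℂ) := by ring
              _ = 1 := by rw [hpow, hp1]
          rw [hs, one_smul]
        · rw [map_pow, aeval_X]
          simp only [Matrix.cons_val_one, Matrix.head_cons, Matrix.cons_val_zero]
          rw [smul_pow, smul_smul]
          have hs : (p.1:ℂ) * (p.2:ℂ) * (p.2:ℂ) ^ (a2 - 1) = 1 := by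
            have hpow : (p.2:ℂ) ^ (a2 - 1) * (p.2:ℂ) = (p.2:ℂ) ^ a2 := by
              rw [← pow_succ]
              congr 1
              omega
            calc (p.1:ℂ) * (p.2:ℂ) * (p.2:ℂ) ^ (a2 - 1)
                = ((p.2:ℂ) ^ (a2 - 1) * (p.2:ℂ)) * (p.1:ℂ) := by ring
              _ = 1 := by rw [hpow, hp2]
          rw [hs, one_smul]
    | zero => simp
    | add x y hx hy ihx ihy => rw [map_add, smul_add, ihx, ihy]
    | smul a x hx ihx => rw [map_smul, smul_comm, ihx]
  · -- finrank
    have hli : LinearIndependent ℂ ![(X 0 ^ (a1 - 1) : MvPolynomial (Fin 2) ℂ), X 1 ^ (a2 - 1)] := by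
      rw [LinearIndependent.pair_iff]
      intro s t hst
      constructor
      · have h' := congrArg (coeff e1) hst
        rw [coeff_add, coeff_smul, coeff_smul, hc1, hc2, if_pos rfl,
          if_neg (fun hh => he12 hh.symm)] at h'
        simpa using h'
      · have h' := congrArg (coeff e2) hst
        rw [coeff_add, coeff_smul, coeff_smul, hc1, hc2, if_neg he12, if_pos rfl] at h'
        simpa using h'
    have hrange : Set.range ![(X 0 ^ (a1 - 1) : MvPolynomial (Fin 2) ℂ), X 1 ^ (a2 - 1)]
        = {X 0 ^ (a1 - 1), X 1 ^ (a2 - 1)} := by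
      ext x
      simp [Fin.exists_fin_two]
      tauto
    rw [← hrange, finrank_span_eq_card hli, Fintype.card_fin]


end
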